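/- Let F : ℝ → ℝ be the distribution function of a probability measure P with everywhere-finite Laplace transform, and suppose F is continuous and strictly increasing. Then h(t) = ∫_{(−∞,t]} e^{tx} dP(x) can be written as h(t) = H(F(t), t) where H(s,t) = ∫_0^s e^{t F^{−1}(u)} du, and H is differentiable on (0,1) × ℝ with partial derivatives H₁(s,t) = e^{t F^{−1}(s)} and H₂(s,t) = ∫_0^s F^{−1}(u) e^{t F^{−1}(u)} du. -/

import Mathlib

open MeasureTheory Real

lemma aux_exp_bound (t x y : ℝ) (hx : |x - t| < 1) :
    ‖y * Real.exp (x * y)‖ ≤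
      Real.exp ((t + 2) * y) + 2 * Real.exp (t * y) + Real.exp ((t - 2) * y) := by
  have h1 : |y| ≤ Real.exp y + Real.exp (-y) := by
    rcases abs_cases y with ⟨h, _⟩ | ⟨h, _⟩
    · rw [h]; nlinarith [Real.add_one_le_exp y, Real.exp_pos (-y)]
    · rw [h]; nlinarith [Real.add_one_le_exp (-y), Real.exp_pos y]
  have hxy := abs_lt.mp hx
  have key : ∀ a b₁ b₂ : ℝ, b₁ ≤ a → a ≤ b₂ →
      Real.exp (a * y) ≤ Real.exp (b₁ * y) + Real.exp (b₂ * y) := by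
    intro a b₁ b₂ h₁ h₂
    rcases le_total 0 y with hy | hy
    · have hle : a * y ≤ b₂ * y := mul_le_mul_of_nonneg_right h₂ hy
      exact le_add_of_nonneg_of_le (Real.exp_pos _).le (Real.exp_le_exp.mpr hle)
    · have hle : a * y ≤ b₁ * y := mul_le_mul_of_nonpos_right h₁ hy
      exact le_add_of_le_of_nonneg (Real.exp_le_exp.mpr hle) (Real.exp_pos _).le
  have h2 : ‖y * Real.exp (x * y)‖ = |y| * Real.exp (x * y) := by
    rw [norm_mul, Real.norm_eq_abs, Real.norm_eq_abs, abs_of_pos (Real.exp_pos _)]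
  rw [h2]
  calc |y| * Real.exp (x * y) ≤ (Real.exp y + Real.exp (-y)) * Real.exp (x * y) :=
        mul_le_mul_of_nonneg_right h1 (Real.exp_pos _).le
    _ = Real.exp (y + x * y) + Real.exp (-y + x * y) := by
        rw [add_mul, ← Real.exp_add, ← Real.exp_add]
    _ = Real.exp ((x + 1) * y) + Real.exp ((x - 1) * y) := by
        rw [show y + x * y = (x + 1) * y from by ring, show -y + x * y = (x - 1) * y from by ring]
    _ ≤ (Real.exp (t * y) + Real.exp ((t + 2) * y)) +
          (Real.exp ((t - 2) * y) + Real.exp (t * y)) :=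
        add_le_add (key (x + 1) t (t + 2) (by linarith) (by linarith))
          (key (x - 1) (t - 2) t (by linarith) (by linarith))
    _ = Real.exp ((t + 2) * y) + 2 * Real.exp (t * y) + Real.exp ((t - 2) * y) := by ring

theorem quantile_representation_and_partials
    (P : Measure ℝ) [IsProbabilityMeasure P]
    (hint : ∀ t : ℝ, Integrable (fun x => exp (t * x)) P)
    (F : ℝ → ℝ) (hF : ∀ t, F t = (P (Set.Iic t)).toReal)
    (hFc : Continuous F) (hFm : StrictMono F)
    (Finv : ℝ → ℝ)
    (hinv₁ : ∀ u ∈ Set.Ioo (0 : ℝ) 1, F (Finv u) = u)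
    (hinv₂ : ∀ t : ℝ, Finv (F t) = t)
    (H : ℝ → ℝ → ℝ)
    (hH : ∀ s t : ℝ, H s t = ∫ u in (0 : ℝ)..s, exp (t * Finv u)) :
    (∀ t : ℝ, (∫ x in Set.Iic t, exp (t * x) ∂P) = H (F t) t) ∧
    (∀ s ∈ Set.Ioo (0 : ℝ) 1, ∀ t : ℝ,
      HasDerivAt (fun s' => H s' t) (exp (t * Finv s)) s ∧
      HasDerivAt (fun t' => H s t') (∫ u in (0 : ℝ)..s, Finv u * exp (t * Finv u)) t ∧
      DifferentiableAt ℝ (fun p : ℝ × ℝ => H p.1 p.2) (s, t)) := by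
  have hFle : ∀ x : ℝ, F x ≤ 1 := by
    intro x
    rw [hF]
    exact ENNReal.toReal_le_of_le_ofReal one_pos.le (by simpa using prob_le_one)
  have hF0 : ∀ x : ℝ, 0 ≤ F x := fun x => by rw [hF]; exact ENNReal.toReal_nonneg
  have hF01 : ∀ x : ℝ, F x ∈ Set.Ioo (0 : ℝ) 1 :=
    fun x => ⟨lt_of_le_of_lt (hF0 (x - 1)) (hFm (by linarith)),
      lt_of_lt_of_le (hFm (show x < x + 1 by linarith)) (hFle (x + 1))⟩
  have hPIic : ∀ x : ℝ, P (Set.Iic x) = ENNReal.ofReal (F x) := by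
    intro x
    rw [hF, ENNReal.ofReal_toReal (measure_ne_top P _)]
  have hFinv_mono : StrictMonoOn Finv (Set.Ioo (0 : ℝ) 1) := by
    intro u hu v hv huv
    rw [← hFm.lt_iff_lt, hinv₁ u hu, hinv₁ v hv]
    exact huv
  have hFinv_contAt : ∀ s ∈ Set.Ioo (0 : ℝ) 1, ContinuousAt Finv s := by
    intro s hs
    apply hFinv_mono.continuousAt_of_image_mem_nhds (Ioo_mem_nhds hs.1 hs.2)
    have himg : Finv '' Set.Ioo 0 1 = Set.univ :=
      Set.eq_univ_of_forall fun x => ⟨F x, hF01 x, hinv₂ x⟩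
    rw [himg]
    exact Filter.univ_mem
  have hFmeas : Measurable F := hFc.measurable
  -- the pushforward of P under F is Lebesgue measure on (0,1)
  have hmap : Measure.map F P = volume.restrict (Set.Ioo (0 : ℝ) 1) := by
    haveI : IsProbabilityMeasure (Measure.map F P) :=
      Measure.isProbabilityMeasure_map hFmeas.aemeasurable
    apply MeasureTheory.Measure.ext_of_Iic
    intro a
    rw [Measure.map_apply hFmeas measurableSet_Iic,
      Measure.restrict_apply measurableSet_Iic]
    rcases le_or_gt a 0 with ha | ha
    · have h1 : F ⁻¹' Set.Iic a = ∅ := by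
        ext x
        simp only [Set.mem_preimage, Set.mem_Iic, Set.mem_empty_iff_false, iff_false, not_le]
        exact lt_of_le_of_lt ha (hF01 x).1
      have h2 : Set.Iic a ∩ Set.Ioo (0 : ℝ) 1 = ∅ := by
        ext u
        simp only [Set.mem_inter_iff, Set.mem_Iic, Set.mem_Ioo, Set.mem_empty_iff_false,
          iff_false, not_and]
        intro hu hv _
        linarith
      rw [h1, h2]
      simp
    · rcases lt_or_ge a 1 with ha1 | ha1
      · have h1 : F ⁻¹' Set.Iic a = Set.Iic (Finv a) := by
          ext x
          simp only [Set.mem_preimage, Set.mem_Iic]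
          conv_lhs => rw [← hinv₁ a ⟨ha, ha1⟩]
          exact hFm.le_iff_le
        have h2 : Set.Iic a ∩ Set.Ioo (0 : ℝ) 1 = Set.Ioc 0 a := by
          ext u
          simp only [Set.mem_inter_iff, Set.mem_Iic, Set.mem_Ioo, Set.mem_Ioc]
          exact ⟨fun h => ⟨h.2.1, h.1⟩, fun h => ⟨h.2, h.1, lt_of_le_of_lt h.2 ha1⟩⟩
        rw [h1, h2, hPIic, hinv₁ a ⟨ha, ha1⟩, Real.volume_Ioc, sub_zero]
      · have h1 : F ⁻¹' Set.Iic a = Set.univ :=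
          Set.eq_univ_of_forall fun x => le_trans (hFle x) ha1
        have h2 : Set.Iic a ∩ Set.Ioo (0 : ℝ) 1 = Set.Ioo 0 1 := by
          ext u
          simp only [Set.mem_inter_iff, Set.mem_Iic, Set.mem_Ioo]
          exact ⟨fun h => h.2, fun h => ⟨le_trans h.2.le ha1, h⟩⟩
        rw [h1, h2, Real.volume_Ioo, measure_univ, sub_zero, ENNReal.ofReal_one]
  have hFinv_aemeas : AEMeasurable Finv (volume.restrict (Set.Ioo (0 : ℝ) 1)) :=
    aemeasurable_restrict_of_monotoneOn measurableSet_Ioo hFinv_mono.monotoneOn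
  have hg_meas : ∀ c : ℝ, AEStronglyMeasurable (fun u => exp (c * Finv u))
      (volume.restrict (Set.Ioo (0 : ℝ) 1)) := fun c =>
    (Real.measurable_exp.comp_aemeasurable (hFinv_aemeas.const_mul c)).aestronglyMeasurable
  have hInt : ∀ c : ℝ, IntegrableOn (fun u => exp (c * Finv u))
      (Set.Ioo (0 : ℝ) 1) volume := by
    intro c
    have hgm : AEStronglyMeasurable (fun u => exp (c * Finv u)) (Measure.map F P) := by
      rw [hmap]; exact hg_meas c
    rw [IntegrableOn, ← hmap, integrable_map_measure hgm hFmeas.aemeasurable]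
    refine (hint c).congr ?_
    filter_upwards with x
    simp [Function.comp, hinv₂ x]
  -- Part 1 : the representation
  have hrepr : ∀ t : ℝ, (∫ x in Set.Iic t, exp (t * x) ∂P) = H (F t) t := by
    intro t
    have hIic : Set.Iic (F t) ∩ Set.Ioo (0 : ℝ) 1 = Set.Ioc 0 (F t) := by
      ext u
      simp only [Set.mem_inter_iff, Set.mem_Iic, Set.mem_Ioo, Set.mem_Ioc]
      exact ⟨fun h => ⟨h.2.1, h.1⟩, fun h => ⟨h.2, h.1, lt_of_le_of_lt h.2 (hF01 t).2⟩⟩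
    have h1 : H (F t) t = ∫ u in Set.Iic (F t), exp (t * Finv u) ∂(Measure.map F P) := by
      rw [hH, intervalIntegral.integral_of_le (hF01 t).1.le, hmap,
        Measure.restrict_restrict measurableSet_Iic, hIic]
    have hgm : AEStronglyMeasurable (fun u => exp (t * Finv u)) (Measure.map F P) := by
      rw [hmap]; exact hg_meas t
    rw [h1, setIntegral_map measurableSet_Iic hgm hFmeas.aemeasurable]
    have hpre : F ⁻¹' Set.Iic (F t) = Set.Iic t := by
      ext x; simp [hFm.le_iff_le]
    rw [hpre]
    exact setIntegral_congr_fun measurableSet_Iic fun x _ => by rw [hinv₂ x]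
  refine ⟨hrepr, ?_⟩
  intro s hs t
  obtain ⟨hs0, hs1⟩ := hs
  have hiiOn : ∀ c : ℝ, ∀ b ∈ Set.Ioo (0 : ℝ) 1,
      IntervalIntegrable (fun u => exp (c * Finv u)) volume 0 b := by
    intro c b hb
    rw [intervalIntegrable_iff_integrableOn_Ioc_of_le hb.1.le]
    exact (hInt c).mono_set fun u hu => ⟨hu.1, lt_of_le_of_lt hu.2 hb.2⟩
  have hii : ∀ c : ℝ, IntervalIntegrable (fun u => exp (c * Finv u)) volume 0 s :=
    fun c => hiiOn c s ⟨hs0, hs1⟩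
  -- (a) derivative in s
  have ha : HasDerivAt (fun s' => H s' t) (exp (t * Finv s)) s := by
    have hd : HasDerivAt (fun s' => ∫ u in (0 : ℝ)..s', exp (t * Finv u))
        (exp (t * Finv s)) s := by
      refine intervalIntegral.integral_hasDerivAt_right (hii t)
        ⟨Set.Ioo 0 1, Ioo_mem_nhds hs0 hs1, hg_meas t⟩ ?_
      exact Real.continuous_exp.continuousAt.comp
        (continuousAt_const.mul (hFinv_contAt s ⟨hs0, hs1⟩))
    have heq : (fun s' => H s' t) = fun s' => ∫ u in (0 : ℝ)..s', exp (t * Finv u) :=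
      funext fun s' => hH s' t
    rw [heq]
    exact hd
  -- (b) derivative in t
  have hsub : Set.uIoc (0 : ℝ) s ⊆ Set.Ioo 0 1 := by
    rw [Set.uIoc_of_le hs0.le]
    exact fun u hu => ⟨hu.1, lt_of_le_of_lt hu.2 hs1⟩
  have hle : volume.restrict (Set.uIoc (0 : ℝ) s) ≤ volume.restrict (Set.Ioo (0 : ℝ) 1) :=
    Measure.restrict_mono hsub le_rfl
  have hFinv_aemeas' : AEMeasurable Finv (volume.restrict (Set.uIoc (0 : ℝ) s)) :=
    hFinv_aemeas.mono_measure hle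
  have hb : HasDerivAt (fun t' => H s t')
      (∫ u in (0 : ℝ)..s, Finv u * exp (t * Finv u)) t := by
    have hd := (intervalIntegral.hasDerivAt_integral_of_dominated_loc_of_deriv_le
      (F := fun x u => exp (x * Finv u)) (F' := fun x u => Finv u * exp (x * Finv u))
      (x₀ := t) (a := (0 : ℝ)) (b := s)
      (bound := fun u => exp ((t + 2) * Finv u) + 2 * exp (t * Finv u) + exp ((t - 2) * Finv u))
      (Metric.ball_mem_nhds t one_pos)
      (Filter.Eventually.of_forall fun x => (hg_meas x).mono_measure hle)
      (hii t)
      ((hFinv_aemeas'.mul ((Real.measurable_exp.comp_aemeasurable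
        (hFinv_aemeas'.const_mul t)))).aestronglyMeasurable)
      (Filter.Eventually.of_forall fun u _ x hx => by
        simpa using aux_exp_bound t x (Finv u) (by simpa [Real.dist_eq] using hx))
      ((((hii (t + 2)).add ((hii t).const_mul 2)).add (hii (t - 2))).congr
        (fun _ _ => rfl))
      (Filter.Eventually.of_forall fun u _ x _ => by
        simpa [mul_comm] using (hasDerivAt_mul_const (Finv u)).exp)).2
    have heq : (fun t' => H s t') = fun t' => ∫ u in (0 : ℝ)..s, exp (t' * Finv u) :=
      funext fun t' => hH s t'
    rw [heq]
    exact hd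
  refine ⟨ha, hb, ?_⟩
  -- (c) joint differentiability
  set c : ℝ := exp (t * Finv s) with hc
  set K : ℝ := ∫ u in (0 : ℝ)..s, Finv u * exp (t * Finv u) with hK
  have h2' : HasFDerivAt (fun p : ℝ × ℝ => H s p.2)
      (K • ContinuousLinearMap.snd ℝ ℝ ℝ) (s, t) :=
    hb.comp_hasFDerivAt (s, t) hasFDerivAt_snd
  have h1' : HasFDerivAt (fun p : ℝ × ℝ => H p.1 p.2 - H s p.2)
      (c • ContinuousLinearMap.fst ℝ ℝ ℝ) (s, t) := by
    refine HasFDerivAt.of_isLittleO ?_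
    rw [Asymptotics.isLittleO_iff]
    intro ε hε
    -- continuity of (u, x) ↦ exp (x * Finv u) at (s, t)
    have hcont : ContinuousAt (fun q : ℝ × ℝ => exp (q.2 * Finv q.1)) (s, t) :=
      Real.continuous_exp.continuousAt.comp
        (continuousAt_snd.mul ((hFinv_contAt s ⟨hs0, hs1⟩).comp continuousAt_fst))
    rcases Metric.continuousAt_iff.mp hcont ε hε with ⟨δ, hδpos, hδ⟩
    set δ₀ : ℝ := min δ (min s (1 - s)) with hδ₀
    have hδ₀pos : 0 < δ₀ := lt_min hδpos (lt_min hs0 (by linarith))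
    filter_upwards [Metric.ball_mem_nhds (s, t) hδ₀pos] with p hp
    rw [Metric.mem_ball, Prod.dist_eq, max_lt_iff] at hp
    obtain ⟨hp1, hp2⟩ := hp
    rw [Real.dist_eq] at hp1 hp2
    have hp1' := abs_lt.mp hp1
    have hδ₀δ : δ₀ ≤ δ := min_le_left _ _
    have hδ₀s : δ₀ ≤ s := le_trans (min_le_right _ _) (min_le_left _ _)
    have hδ₀1s : δ₀ ≤ 1 - s := le_trans (min_le_right _ _) (min_le_right _ _)
    have hp1mem : p.1 ∈ Set.Ioo (0 : ℝ) 1 := ⟨by linarith, by linarith⟩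
    -- the increment in the first variable is an interval integral from s to p.1
    have hdiff : H p.1 p.2 - H s p.2 = ∫ u in s..p.1, exp (p.2 * Finv u) := by
      rw [hH, hH]
      exact intervalIntegral.integral_interval_sub_left (hiiOn p.2 p.1 hp1mem)
        (hiiOn p.2 s ⟨hs0, hs1⟩)
    have hbound : ∀ u ∈ Set.uIoc s p.1, ‖exp (p.2 * Finv u) - c‖ ≤ ε := by
      intro u hu
      have hu' : |u - s| ≤ |p.1 - s| := by
        rcases Set.mem_uIoc.mp hu with ⟨h1, h2⟩ | ⟨h1, h2⟩
        · rw [abs_of_nonneg (by linarith : (0:ℝ) ≤ u - s),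
            abs_of_nonneg (by linarith : (0:ℝ) ≤ p.1 - s)]
          linarith
        · rw [abs_of_nonpos (by linarith : u - s ≤ 0),
            abs_of_nonpos (by linarith : p.1 - s ≤ 0)]
          linarith
      have hd : dist ((u, p.2) : ℝ × ℝ) (s, t) < δ := by
        rw [Prod.dist_eq, max_lt_iff, Real.dist_eq, Real.dist_eq]
        exact ⟨lt_of_le_of_lt hu' (lt_of_lt_of_le hp1 hδ₀δ), lt_of_lt_of_le hp2 hδ₀δ⟩
      have hee := hδ hd
      rw [Real.dist_eq] at hee
      exact le_of_lt (by simpa [hc, Real.norm_eq_abs] using hee)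
    have hii2 : IntervalIntegrable (fun u => exp (p.2 * Finv u)) volume s p.1 :=
      ((hiiOn p.2 s ⟨hs0, hs1⟩).symm.trans (hiiOn p.2 p.1 hp1mem))
    have hLval : (c • ContinuousLinearMap.fst ℝ ℝ ℝ) (p - (s, t)) = c * (p.1 - s) := by
      simp
    have hnorm : ‖∫ u in s..p.1, (exp (p.2 * Finv u) - c)‖ ≤ ε * |p.1 - s| :=
      intervalIntegral.norm_integral_le_of_norm_le_const hbound
    have hfst : |p.1 - s| ≤ ‖p - (s, t)‖ := by
      have h := norm_fst_le (p - (s, t))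
      simpa [Prod.fst_sub, Real.norm_eq_abs] using h
    show ‖H p.1 p.2 - H s p.2 - (H s t - H s t) -
        (c • ContinuousLinearMap.fst ℝ ℝ ℝ) (p - (s, t))‖ ≤ ε * ‖p - (s, t)‖
    have hsubeq : H p.1 p.2 - H s p.2 - (H s t - H s t) -
        (c • ContinuousLinearMap.fst ℝ ℝ ℝ) (p - (s, t))
        = ∫ u in s..p.1, (exp (p.2 * Finv u) - c) := by
      rw [intervalIntegral.integral_sub hii2 intervalIntegrable_const,
        intervalIntegral.integral_const, smul_eq_mul, hdiff, hLval, sub_self, sub_zero]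
      ring
    rw [hsubeq]
    exact le_trans hnorm (mul_le_mul_of_nonneg_left hfst hε.le)
  have hsum := h1'.add h2'
  exact (hsum.congr_of_eventuallyEq (Filter.Eventually.of_forall fun p => by
    show H p.1 p.2 = (H p.1 p.2 - H s p.2) + H s p.2
    ring)).differentiableAt
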